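/- Let M be an integer matrix with q rows and let I(M) be the associated pure difference binomial ideal in k[x_1,...,x_q]. Two lattice points u, v ∈ ℕ^q satisfy x^u - x^v ∈ I(M) if and only if u and v lie in the same M-subgraph of ℕ^q, i.e., the congruence classes of the congruence determined by I(M) are exactly the connected components of the graph Γ(M). -/

import Mathlib

open MvPolynomial

/-- The positive part `w₊ ∈ ℕ^q` of an integer vector `w`. -/
noncomputable def posPart {q : ℕ} (w : Fin q → ℤ) : Fin q →₀ ℕ :=
  Finsupp.equivFunOnFinite.symm fun i => (w i).toNat

/-- The pure difference binomial ideal `I(M)` of an integer matrix `M`. -/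
noncomputable def latticeBasisIdeal (k : Type*) [Field k] {q m : ℕ}
    (M : Matrix (Fin q) (Fin m) ℤ) : Ideal (MvPolynomial (Fin q) k) :=
  Ideal.span {f | ∃ j : Fin m,
    f = monomial (posPart fun i => M i j) 1 - monomial (posPart fun i => -(M i j)) 1}

/-- `u` and `v` are adjacent in the graph `Γ(M)` if `u - v` or `v - u` is a
column of `M`. -/
def Medge {q m : ℕ} (M : Matrix (Fin q) (Fin m) ℤ) (u v : Fin q →₀ ℕ) : Prop :=
  ∃ j : Fin m, (∀ i, (u i : ℤ) - (v i : ℤ) = M i j) ∨ (∀ i, (v i : ℤ) - (u i : ℤ) = M i j)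


@[simp] lemma posPart_apply {q : ℕ} (w : Fin q → ℤ) (i : Fin q) :
    _root_.posPart w i = (w i).toNat := rfl

lemma medge_symm {q m : ℕ} {M : Matrix (Fin q) (Fin m) ℤ} {u v : Fin q →₀ ℕ}
    (h : Medge M u v) : Medge M v u := by
  obtain ⟨j, h | h⟩ := h
  exacts [⟨j, Or.inr h⟩, ⟨j, Or.inl h⟩]

lemma medge_add {q m : ℕ} {M : Matrix (Fin q) (Fin m) ℤ} {u v : Fin q →₀ ℕ}
    (c : Fin q →₀ ℕ) (h : Medge M u v) : Medge M (u + c) (v + c) := by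
  obtain ⟨j, h | h⟩ := h
  · exact ⟨j, Or.inl fun i => by have := h i; simp [Finsupp.add_apply]; omega⟩
  · exact ⟨j, Or.inr fun i => by have := h i; simp [Finsupp.add_apply]; omega⟩

/-- The congruence on `ℕ^q` whose classes are the connected components of `Γ(M)`. -/
def Mcon {q m : ℕ} (M : Matrix (Fin q) (Fin m) ℤ) : AddCon (Fin q →₀ ℕ) where
  r u v := Relation.ReflTransGen (Medge M) u v
  iseqv := ⟨fun _ => .refl,
    fun h => by haveI : Std.Symm (Medge M) := ⟨fun _ _ => medge_symm⟩; exact Std.Symm.symm _ _ h,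
    fun h1 h2 => h1.trans h2⟩
  add' := by
    intro w x y z h1 h2
    have e1 : Relation.ReflTransGen (Medge M) (w + y) (x + y) :=
      Relation.ReflTransGen.lift (· + y) (fun a b hab => medge_add y hab) _ _ h1
    have e2 : Relation.ReflTransGen (Medge M) (x + y) (x + z) := by
      have := Relation.ReflTransGen.lift (· + x) (fun a b hab => medge_add x hab) _ _ h2
      simpa [add_comm] using this
    exact e1.trans e2

lemma mem_of_medge_half {k : Type*} [Field k] {q m : ℕ}
    {M : Matrix (Fin q) (Fin m) ℤ} {u v : Fin q →₀ ℕ} (j : Fin m)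
    (h : ∀ i, (u i : ℤ) - (v i : ℤ) = M i j) :
    monomial u (1 : k) - monomial v 1 ∈ latticeBasisIdeal k M := by
  set w : Fin q → ℤ := fun i => M i j with hw
  set c : Fin q →₀ ℕ := u - _root_.posPart w with hc
  have hu : c + _root_.posPart w = u := by
    ext i
    have := h i
    have hwi : w i = M i j := rfl
    simp only [hc, Finsupp.add_apply, Finsupp.tsub_apply, posPart_apply]
    omega
  have hv : c + _root_.posPart (fun i => -(M i j)) = v := by
    ext i
    have := h i
    have hwi : w i = M i j := rfl
    simp only [hc, Finsupp.add_apply, Finsupp.tsub_apply, posPart_apply]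
    omega
  have hgen : monomial (_root_.posPart w) (1 : k) - monomial (posPart fun i => -(M i j)) 1 ∈
      latticeBasisIdeal k M := Ideal.subset_span ⟨j, rfl⟩
  have := Ideal.mul_mem_left _ (monomial c (1 : k)) hgen
  rwa [mul_sub, monomial_mul, monomial_mul, one_mul, hu, hv] at this

lemma mem_of_medge {k : Type*} [Field k] {q m : ℕ}
    {M : Matrix (Fin q) (Fin m) ℤ} {u v : Fin q →₀ ℕ}
    (h : Medge M u v) :
    monomial u (1 : k) - monomial v 1 ∈ latticeBasisIdeal k M := by
  obtain ⟨j, h | h⟩ := h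
  · exact mem_of_medge_half j h
  · have := (latticeBasisIdeal k M).neg_mem (mem_of_medge_half (k := k) j h)
    simpa using this

/-- `x^u - x^v ∈ I(M)` iff `u` and `v` lie in the same `M`-subgraph of `ℕ^q`,
i.e. the same connected component of `Γ(M)`. -/
theorem mem_latticeBasisIdeal_iff_M_path {k : Type*} [Field k] {q m : ℕ}
    (M : Matrix (Fin q) (Fin m) ℤ) (u v : Fin q →₀ ℕ) :
    (monomial u (1 : k) - monomial v 1 ∈ latticeBasisIdeal k M) ↔
      Relation.ReflTransGen (Medge M) u v := by
  constructor
  · intro h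
    -- map to the monoid algebra of the quotient monoid
    let φ : MvPolynomial (Fin q) k →+* AddMonoidAlgebra k (Mcon M).Quotient :=
      AddMonoidAlgebra.mapDomainRingHom k ((Mcon M).mk')
    have hmono : ∀ a : Fin q →₀ ℕ, φ (monomial a 1) = AddMonoidAlgebra.single ((Mcon M).mk' a) (1 : k) := by
      intro a
      show AddMonoidAlgebra.mapDomain _ (monomial a 1) = _
      rw [← single_eq_monomial, AddMonoidAlgebra.mapDomain_single]
    have hker : latticeBasisIdeal k M ≤ RingHom.ker φ := by
      rw [latticeBasisIdeal, Ideal.span_le]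
      rintro f ⟨j, rfl⟩
      have hrel : (Mcon M) (_root_.posPart fun i => M i j) (_root_.posPart fun i => -(M i j)) := by
        refine Relation.ReflTransGen.single ⟨j, Or.inl fun i => ?_⟩
        simp only [posPart_apply]
        omega
      simp only [SetLike.mem_coe, RingHom.mem_ker, map_sub, hmono]
      rw [sub_eq_zero]
      congr 1
      exact (AddCon.eq _).mpr hrel
    have h0 : φ (monomial u (1 : k) - monomial v 1) = 0 := hker h
    rw [map_sub, hmono, hmono, sub_eq_zero] at h0
    rcases AddMonoidAlgebra.single_inj.mp h0 with ⟨heq, -⟩ | ⟨h1, -⟩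
    · exact (AddCon.eq _).mp heq
    · exact absurd h1 one_ne_zero
  · intro h
    induction h with
    | refl => simp
    | @tail b c _ hedge ih =>
        have h2 := mem_of_medge (k := k) hedge
        have heq : monomial u (1 : k) - monomial c 1 =
            (monomial u 1 - monomial b 1) + (monomial b 1 - monomial c 1) := by ring
        rw [heq]
        exact add_mem ih h2
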